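/- For Hermitian operators A, ρ on a D-dimensional Hilbert space, Tr(A U ρ U†) ≤ D‖A‖‖ρ‖ for any unitary U, where ‖X‖ = √(Tr(X²)/D). Consequently, under su(2) control the maximum extractable work satisfies W_c* ≤ D‖H_c^f‖‖ρ_c^i‖ + Tr(H_c^f ρ_c^i), with equality attained at T = c(π−φ)/ω by the optimal rotation. -/

import Mathlib

open Matrix

/-- Normalized Frobenius norm. -/
noncomputable def nfrob {D : ℕ} (M : Matrix (Fin D) (Fin D) ℂ) : ℝ :=
  Real.sqrt (((Mᴴ * M).trace).re / D)

/-- `evol M t = e^{-itM}`. -/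
noncomputable def evol {D : ℕ} (M : Matrix (Fin D) (Fin D) ℂ) (t : ℝ) :
    Matrix (Fin D) (Fin D) ℂ :=
  NormedSpace.exp ((((-t : ℝ) : ℂ) * Complex.I) • M)

section Helpers

variable {D : ℕ}

attribute [local instance] Matrix.linftyOpSemiNormedRing Matrix.linftyOpNormedRing
  Matrix.linftyOpNormedAlgebra

private theorem exp_intertwine (X Y P : Matrix (Fin D) (Fin D) ℂ) (h : X * P = P * Y) :
    NormedSpace.exp X * P = P * NormedSpace.exp Y := by
  have hn : ∀ n : ℕ, X ^ n * P = P * Y ^ n := by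
    intro n
    induction n with
    | zero => simp
    | succ n ih => rw [pow_succ, pow_succ, mul_assoc, h, ← mul_assoc, ih, mul_assoc]
  have hs := NormedSpace.expSeries_summable' (𝕂 := ℂ) X
  have hs' := NormedSpace.expSeries_summable' (𝕂 := ℂ) Y
  rw [NormedSpace.exp_eq_tsum ℂ]
  calc (∑' (n : ℕ), ((n.factorial : ℂ))⁻¹ • X ^ n) * P
      = ∑' (n : ℕ), (((n.factorial : ℂ))⁻¹ • X ^ n) * P := (hs.tsum_mul_right P).symm
    _ = ∑' (n : ℕ), P * (((n.factorial : ℂ))⁻¹ • Y ^ n) := by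
        congr 1; funext n
        rw [smul_mul_assoc, hn, mul_smul_comm]
    _ = P * ∑' (n : ℕ), ((n.factorial : ℂ))⁻¹ • Y ^ n := hs'.tsum_mul_left P

private theorem exp_shift (X : Matrix (Fin D) (Fin D) ℂ) (a : ℂ) :
    NormedSpace.exp (X + a • 1) = Complex.exp a • NormedSpace.exp X := by
  rw [Matrix.exp_add_of_commute _ _ ((Commute.one_right X).smul_right a)]
  have h1 : (a • 1 : Matrix (Fin D) (Fin D) ℂ) = algebraMap ℂ _ a := by
    rw [Algebra.algebraMap_eq_smul_one]
  rw [h1, show NormedSpace.exp (algebraMap ℂ (Matrix (Fin D) (Fin D) ℂ) a)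
      = algebraMap ℂ _ (NormedSpace.exp a) from (NormedSpace.algebraMap_exp_comm a).symm,
    Algebra.algebraMap_eq_smul_one,
    mul_smul_comm, mul_one, ← Complex.exp_eq_exp_ℂ]

private theorem exp_conj_shift (X P : Matrix (Fin D) (Fin D) ℂ) (a : ℂ)
    (h : X * P = P * X + a • P) :
    NormedSpace.exp X * P = Complex.exp a • (P * NormedSpace.exp X) := by
  have h' : X * P = P * (X + a • 1) := by
    rw [mul_add, mul_smul_comm, mul_one, h]
  rw [exp_intertwine X (X + a • 1) P h', exp_shift, mul_smul_comm]

private theorem exp_mul_exp_neg_cancel (X : Matrix (Fin D) (Fin D) ℂ) :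
    NormedSpace.exp X * NormedSpace.exp (-X) = 1 := by
  rw [← Matrix.exp_add_of_commute _ _ (Commute.neg_right (Commute.refl X)),
    add_neg_cancel, NormedSpace.exp_zero]

private theorem trace_form (N₁ N₂ : Matrix (Fin D) (Fin D) ℂ) :
    (N₁ᴴ * N₂).trace = ∑ i : Fin D, ∑ k : Fin D, (starRingEnd ℂ) (N₁ k i) * N₂ k i := by
  simp [Matrix.trace, Matrix.diag, Matrix.mul_apply, Matrix.conjTranspose_apply]

private theorem trace_self_re (N : Matrix (Fin D) (Fin D) ℂ) :
    ((Nᴴ * N).trace).re = ∑ i : Fin D, ∑ k : Fin D, ‖N k i‖ ^ 2 := by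
  rw [trace_form, Complex.re_sum]
  refine Finset.sum_congr rfl fun i _ => ?_
  rw [Complex.re_sum]
  refine Finset.sum_congr rfl fun k _ => ?_
  rw [Complex.sq_norm, Complex.normSq_apply, Complex.mul_re, Complex.conj_re, Complex.conj_im]
  ring

private theorem trace_self_re_nonneg (N : Matrix (Fin D) (Fin D) ℂ) :
    0 ≤ ((Nᴴ * N).trace).re := by
  rw [trace_self_re]
  positivity

private theorem cs_trace (N₁ N₂ : Matrix (Fin D) (Fin D) ℂ) :
    ((N₁ᴴ * N₂).trace).re
      ≤ Real.sqrt ((N₁ᴴ * N₁).trace).re * Real.sqrt ((N₂ᴴ * N₂).trace).re := by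
  rw [trace_form, trace_self_re, trace_self_re, Complex.re_sum]
  simp only [Complex.re_sum, ← Fintype.sum_prod_type']
  calc ∑ p : Fin D × Fin D, ((starRingEnd ℂ) (N₁ p.2 p.1) * N₂ p.2 p.1).re
      ≤ ∑ p : Fin D × Fin D, ‖N₁ p.2 p.1‖ * ‖N₂ p.2 p.1‖ := by
        apply Finset.sum_le_sum
        intro p _
        calc ((starRingEnd ℂ) (N₁ p.2 p.1) * N₂ p.2 p.1).re
            ≤ ‖(starRingEnd ℂ) (N₁ p.2 p.1) * N₂ p.2 p.1‖ := Complex.re_le_norm _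
          _ = ‖N₁ p.2 p.1‖ * ‖N₂ p.2 p.1‖ := by
              rw [norm_mul, Complex.norm_conj]
    _ ≤ Real.sqrt (∑ p : Fin D × Fin D, ‖N₁ p.2 p.1‖ ^ 2) *
          Real.sqrt (∑ p : Fin D × Fin D, ‖N₂ p.2 p.1‖ ^ 2) :=
        Real.sum_mul_le_sqrt_mul_sqrt _ _ _

private theorem sqrt_trace_eq (hD : 0 < D) (M : Matrix (Fin D) (Fin D) ℂ) :
    Real.sqrt (((Mᴴ * M).trace).re) = Real.sqrt D * nfrob M := by
  unfold nfrob
  rw [Real.sqrt_div (trace_self_re_nonneg M), mul_div_cancel₀]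
  positivity

private theorem part1 (hD : 0 < D) (A B : Matrix (Fin D) (Fin D) ℂ)
    (hA : A.IsHermitian)
    (U : Matrix (Fin D) (Fin D) ℂ) (hU : U ∈ Matrix.unitaryGroup (Fin D) ℂ) :
    ((A * (U * B * Uᴴ)).trace).re ≤ (D : ℝ) * nfrob A * nfrob B := by
  have hU1 : Uᴴ * U = 1 := by
    have := hU.1
    simpa [Matrix.star_eq_conjTranspose] using this
  set X := U * B * Uᴴ with hX
  have hXX : (Xᴴ * X).trace = (Bᴴ * B).trace := by
    have h1 : Xᴴ = U * Bᴴ * Uᴴ := by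
      simp [hX, Matrix.conjTranspose_mul, Matrix.mul_assoc]
    have h2 : Xᴴ * X = U * (Bᴴ * B) * Uᴴ := by
      rw [h1, hX]
      calc U * Bᴴ * Uᴴ * (U * B * Uᴴ) = U * Bᴴ * (Uᴴ * U) * B * Uᴴ := by
            simp only [Matrix.mul_assoc]
        _ = U * (Bᴴ * B) * Uᴴ := by rw [hU1]; simp only [Matrix.mul_assoc, Matrix.mul_one]
    rw [h2, Matrix.trace_mul_cycle, ← Matrix.mul_assoc, hU1, Matrix.one_mul]
  have h0 : A * X = Aᴴ * X := by rw [hA.eq]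
  calc ((A * X).trace).re = ((Aᴴ * X).trace).re := by rw [h0]
    _ ≤ Real.sqrt ((Aᴴ * A).trace).re * Real.sqrt ((Xᴴ * X).trace).re := cs_trace A X
    _ = (Real.sqrt D * nfrob A) * (Real.sqrt D * nfrob B) := by
        rw [hXX, sqrt_trace_eq hD, sqrt_trace_eq hD]
    _ = (D : ℝ) * nfrob A * nfrob B := by
        rw [show (Real.sqrt D * nfrob A) * (Real.sqrt D * nfrob B)
            = (Real.sqrt D * Real.sqrt D) * nfrob A * nfrob B by ring,
          Real.mul_self_sqrt (by positivity)]

end Helpers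

/-- Cauchy–Schwarz bound `Tr(A UρU†) ≤ D‖A‖‖ρ‖`; consequently under su(2)
control the extractable work is bounded by `D‖H_c^f‖‖ρ_c^i‖ + Tr(H_c^f ρ_c^i)`,
with equality attained at `T* = c(π-φ)/ω`. -/
theorem stmt_11 (D : ℕ) (hD : 0 < D) (S : Fin 3 → Matrix (Fin D) (Fin D) ℂ)
    (hH : ∀ α, (S α).IsHermitian)
    (hc01 : S 0 * S 1 - S 1 * S 0 = Complex.I • S 2)
    (hc12 : S 1 * S 2 - S 2 * S 1 = Complex.I • S 0)
    (hc20 : S 2 * S 0 - S 0 * S 2 = Complex.I • S 1)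
    (horth : ∀ α β, α ≠ β → (S α * S β).trace = 0)
    (c : ℝ) (hc : 0 < c) (hnorm : ∀ α, nfrob (S α) = c)
    (CH Cρ ω φ : ℝ) (hCH : 0 < CH) (hCρ : 0 < Cρ) (hω : 0 < ω)
    (hφ : φ ∈ Set.Icc 0 Real.pi)
    (Hf ρ Hop : Matrix (Fin D) (Fin D) ℂ)
    (hHf : Hf = (CH : ℂ) • S 0)
    (hρ : ρ = (Cρ : ℂ) • (((Real.cos φ : ℝ) : ℂ) • S 0 + ((Real.sin φ : ℝ) : ℂ) • S 1))
    (hHop : Hop = ((c⁻¹ : ℝ) : ℂ) • S 2)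
    (Tstar : ℝ) (hTstar : Tstar = c * (Real.pi - φ) / ω) :
    (∀ A B : Matrix (Fin D) (Fin D) ℂ, A.IsHermitian → B.IsHermitian →
      ∀ U ∈ Matrix.unitaryGroup (Fin D) ℂ,
        ((A * (U * B * Uᴴ)).trace).re ≤ (D : ℝ) * nfrob A * nfrob B) ∧
    (∀ U ∈ Matrix.unitaryGroup (Fin D) ℂ,
      -((Hf * (U * ρ * Uᴴ)).trace).re + ((Hf * ρ).trace).re
        ≤ (D : ℝ) * nfrob Hf * nfrob ρ + ((Hf * ρ).trace).re) ∧
    (-((Hf * (evol Hop (ω * Tstar) * ρ * evol Hop (-(ω * Tstar)))).trace).re +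
        ((Hf * ρ).trace).re
      = (D : ℝ) * nfrob Hf * nfrob ρ + ((Hf * ρ).trace).re) := by
  have hDR : (0:ℝ) < (D:ℝ) := by exact_mod_cast hD
  -- trace values
  have tsq : ∀ α, ((S α * S α).trace).re = (D:ℝ) * c ^ 2 := by
    intro α
    have h := hnorm α
    unfold nfrob at h
    have hx : 0 ≤ ((S α)ᴴ * S α).trace.re / D :=
      div_nonneg (trace_self_re_nonneg _) (le_of_lt hDR)
    have h2 := Real.sq_sqrt hx
    rw [h] at h2
    have h3 : ((S α)ᴴ * S α).trace.re = (D:ℝ) * c ^ 2 := by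
      field_simp at h2
      linarith
    rw [(hH α).eq] at h3
    exact h3
  -- Hermiticity
  have hHfherm : Hf.IsHermitian := by
    rw [hHf, Matrix.IsHermitian, Matrix.conjTranspose_smul, (hH 0).eq, Complex.star_def,
      Complex.conj_ofReal]
  have hρcoreherm :
      ((((Real.cos φ : ℝ) : ℂ) • S 0 + ((Real.sin φ : ℝ) : ℂ) • S 1)ᴴ)
        = (((Real.cos φ : ℝ) : ℂ) • S 0 + ((Real.sin φ : ℝ) : ℂ) • S 1) := by
    rw [Matrix.conjTranspose_add, Matrix.conjTranspose_smul, Matrix.conjTranspose_smul,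
      (hH 0).eq, (hH 1).eq]
    simp only [Complex.star_def, Complex.conj_ofReal]
  have hρherm : ρ.IsHermitian := by
    rw [hρ, Matrix.IsHermitian, Matrix.conjTranspose_smul, hρcoreherm, Complex.star_def,
      Complex.conj_ofReal]
  -- nfrob values
  have hHfn : nfrob Hf = CH * c := by
    unfold nfrob
    rw [hHf, Matrix.conjTranspose_smul, (hH 0).eq, Complex.star_def, Complex.conj_ofReal,
      smul_mul_assoc, mul_smul_comm, smul_smul, Matrix.trace_smul, smul_eq_mul,
      ← Complex.ofReal_mul, Complex.re_ofReal_mul, tsq 0]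
    rw [show CH * CH * ((D:ℝ) * c ^ 2) / D = (CH * c) ^ 2 * (D / D) by ring,
      div_self (ne_of_gt hDR), mul_one, Real.sqrt_sq (by positivity)]
  have htρcore : ((((((Real.cos φ : ℝ) : ℂ) • S 0 + ((Real.sin φ : ℝ) : ℂ) • S 1) *
      ((((Real.cos φ : ℝ) : ℂ) • S 0 + ((Real.sin φ : ℝ) : ℂ) • S 1))).trace)).re
      = (D:ℝ) * c ^ 2 := by
    have horth01 := horth 0 1 (by decide)
    have horth10 := horth 1 0 (by decide)
    have expand : (((Real.cos φ : ℝ) : ℂ) • S 0 + ((Real.sin φ : ℝ) : ℂ) • S 1) *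
        ((((Real.cos φ : ℝ) : ℂ) • S 0 + ((Real.sin φ : ℝ) : ℂ) • S 1))
        = (((Real.cos φ : ℝ) : ℂ) * ((Real.cos φ : ℝ) : ℂ)) • (S 0 * S 0)
          + ((((Real.cos φ : ℝ) : ℂ) * ((Real.sin φ : ℝ) : ℂ)) • (S 0 * S 1)
          + ((((Real.sin φ : ℝ) : ℂ) * ((Real.cos φ : ℝ) : ℂ)) • (S 1 * S 0)
          + (((Real.sin φ : ℝ) : ℂ) * ((Real.sin φ : ℝ) : ℂ)) • (S 1 * S 1))) := by
      simp only [add_mul, mul_add, smul_mul_assoc, mul_smul_comm, smul_smul]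
      module
    rw [expand]
    simp only [Matrix.trace_add, Matrix.trace_smul, horth01, horth10, smul_zero, smul_eq_mul,
      mul_zero, add_zero, zero_add, ← Complex.ofReal_mul, Complex.add_re,
      Complex.re_ofReal_mul, tsq]
    linear_combination ((D:ℝ) * c ^ 2) * Real.sin_sq_add_cos_sq φ
  have hρn : nfrob ρ = Cρ * c := by
    unfold nfrob
    rw [hρ, Matrix.conjTranspose_smul, hρcoreherm, Complex.star_def, Complex.conj_ofReal,
      smul_mul_assoc, mul_smul_comm, smul_smul, Matrix.trace_smul, smul_eq_mul,
      ← Complex.ofReal_mul, Complex.re_ofReal_mul, htρcore]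
    rw [show Cρ * Cρ * ((D:ℝ) * c ^ 2) / D = (Cρ * c) ^ 2 * (D / D) by ring,
      div_self (ne_of_gt hDR), mul_one, Real.sqrt_sq (by positivity)]
  refine ⟨fun A B hA _ U hU => part1 hD A B hA U hU, ?_, ?_⟩
  · -- part 2
    intro U hU
    have key := part1 hD (-Hf) ρ hHfherm.neg U hU
    have h1 : nfrob (-Hf) = nfrob Hf := by
      unfold nfrob
      rw [Matrix.conjTranspose_neg, neg_mul_neg]
    have h2 : (((-Hf) * (U * ρ * Uᴴ)).trace).re = -((Hf * (U * ρ * Uᴴ)).trace).re := by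
      rw [Matrix.neg_mul, Matrix.trace_neg, Complex.neg_re]
    rw [h1, h2] at key
    linarith
  · -- part 3 : equality at optimal time
    set θ : ℝ := Real.pi - φ with hθdef
    set z : ℂ := -(θ:ℂ) * Complex.I with hzdef
    set X : Matrix (Fin D) (Fin D) ℂ := z • S 2 with hXdef
    have hcc : (c:ℂ) ≠ 0 := Complex.ofReal_ne_zero.mpr (ne_of_gt hc)
    have hωT : ω * Tstar = c * θ := by
      rw [hTstar, hθdef]
      field_simp
    have hU1eq : evol Hop (ω * Tstar) = NormedSpace.exp X := by
      unfold evol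
      congr 1
      rw [hHop, smul_smul, hXdef]
      congr 1
      rw [hωT, hzdef]
      push_cast
      field_simp
    have hnegX : -X = ((θ:ℂ) * Complex.I) • S 2 := by
      rw [hXdef, ← neg_smul]
      congr 1
      rw [hzdef]
      ring
    have hU2eq : evol Hop (-(ω * Tstar)) = NormedSpace.exp (-X) := by
      unfold evol
      rw [hnegX]
      congr 1
      rw [hHop, smul_smul]
      congr 1
      rw [neg_neg, hωT]
      push_cast
      field_simp
    -- commutation facts
    have h20' : S 2 * S 0 = Complex.I • S 1 + S 0 * S 2 := sub_eq_iff_eq_add.mp hc20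
    have h12' : S 2 * S 1 = S 1 * S 2 - Complex.I • S 0 := by
      have h := sub_eq_iff_eq_add.mp hc12
      rw [eq_sub_iff_add_eq]
      rw [h]
      abel
    set P : Matrix (Fin D) (Fin D) ℂ := S 0 + Complex.I • S 1 with hPdef
    set Mm : Matrix (Fin D) (Fin D) ℂ := S 0 - Complex.I • S 1 with hMdef
    have hSP : S 2 * P = P * S 2 + P := by
      rw [hPdef]
      simp only [mul_add, add_mul, mul_smul_comm, smul_mul_assoc, h20', h12']
      simp only [smul_sub, smul_smul, Complex.I_mul_I]
      module
    have hSM : S 2 * Mm = Mm * S 2 - Mm := by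
      rw [hMdef]
      simp only [mul_sub, sub_mul, mul_smul_comm, smul_mul_assoc, h20', h12']
      simp only [smul_sub, smul_smul, Complex.I_mul_I]
      module
    have hXP : X * P = P * X + z • P := by
      rw [hXdef, smul_mul_assoc, hSP, smul_add, mul_smul_comm]
    have hXM : X * Mm = Mm * X + (-z) • Mm := by
      rw [hXdef, smul_mul_assoc, hSM, smul_sub, mul_smul_comm, neg_smul, sub_eq_add_neg]
    set E : Matrix (Fin D) (Fin D) ℂ := NormedSpace.exp X with hEdef
    have hEP : E * P = Complex.exp z • (P * E) := exp_conj_shift X P z hXP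
    have hEM : E * Mm = Complex.exp (-z) • (Mm * E) := exp_conj_shift X Mm (-z) hXM
    -- scalar identities
    set u : ℂ := Complex.exp (-(φ:ℂ) * Complex.I) / 2 with hudef
    set v : ℂ := Complex.exp ((φ:ℂ) * Complex.I) / 2 with hvdef
    have hu : u * Complex.exp z = -(1/2 : ℂ) := by
      rw [hudef, div_mul_eq_mul_div, ← Complex.exp_add]
      have hsum : -(φ:ℂ) * Complex.I + z = -((Real.pi:ℝ) * Complex.I) := by
        rw [hzdef, hθdef]
        push_cast
        ring
      rw [hsum, Complex.exp_neg, Complex.exp_pi_mul_I]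
      norm_num
    have hv : v * Complex.exp (-z) = -(1/2 : ℂ) := by
      rw [hvdef, div_mul_eq_mul_div, ← Complex.exp_add]
      have hsum : (φ:ℂ) * Complex.I + (-z) = (Real.pi:ℝ) * Complex.I := by
        rw [hzdef, hθdef]
        push_cast
        ring
      rw [hsum, Complex.exp_pi_mul_I]
      norm_num
    have hsu : u + v = ((Real.cos φ : ℝ) : ℂ) := by
      rw [hudef, hvdef, Complex.ofReal_cos]
      have h1 : -(φ:ℂ) * Complex.I = (-(φ:ℂ)) * Complex.I := by ring
      rw [h1, Complex.exp_mul_I, Complex.exp_mul_I, Complex.cos_neg, Complex.sin_neg]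
      ring
    have hsv : (u - v) * Complex.I = ((Real.sin φ : ℝ) : ℂ) := by
      rw [hudef, hvdef, Complex.ofReal_sin]
      have h1 : -(φ:ℂ) * Complex.I = (-(φ:ℂ)) * Complex.I := by ring
      rw [h1, Complex.exp_mul_I, Complex.exp_mul_I, Complex.cos_neg, Complex.sin_neg]
      linear_combination (-(Complex.sin (φ:ℂ))) * Complex.I_sq
    have hdecomp : (((Real.cos φ : ℝ) : ℂ) • S 0 + ((Real.sin φ : ℝ) : ℂ) • S 1)
        = u • P + v • Mm := by
      rw [← hsu, ← hsv, hPdef, hMdef]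
      simp only [smul_add, smul_sub, smul_smul]
      module
    have hadd : P * E + Mm * E = (2:ℂ) • (S 0 * E) := by
      rw [← add_mul]
      have h1 : P + Mm = (2:ℂ) • S 0 := by
        rw [hPdef, hMdef]
        module
      rw [h1, smul_mul_assoc]
    have hEρ : E * ρ = (-(Cρ:ℂ)) • (S 0 * E) := by
      rw [hρ, hdecomp, mul_smul_comm, mul_add, mul_smul_comm, mul_smul_comm, hEP, hEM,
        smul_smul, smul_smul, hu, hv]
      rw [show (-(1/2:ℂ)) • (P * E) + (-(1/2:ℂ)) • (Mm * E)
          = (-(1/2:ℂ)) • (P * E + Mm * E) by rw [smul_add], hadd, smul_smul]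
      rw [smul_smul]
      congr 1
      ring
    have hconj : E * ρ * NormedSpace.exp (-X) = (-(Cρ:ℂ)) • S 0 := by
      rw [hEρ, smul_mul_assoc, mul_assoc, hEdef, exp_mul_exp_neg_cancel, mul_one]
    have htr : ((Hf * (evol Hop (ω * Tstar) * ρ * evol Hop (-(ω * Tstar)))).trace).re
        = -(CH * Cρ * ((D:ℝ) * c ^ 2)) := by
      rw [hU1eq, hU2eq, hconj, hHf]
      rw [smul_mul_assoc, mul_smul_comm, smul_smul, Matrix.trace_smul, smul_eq_mul]
      rw [show (CH:ℂ) * (-(Cρ:ℂ)) = ((-(CH * Cρ) : ℝ) : ℂ) by push_cast; ring]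
      rw [Complex.re_ofReal_mul, tsq 0]
      ring
    rw [htr, hHfn, hρn]
    ring
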